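/- Let Ω be a countably infinite set, let M be a topologically closed submonoid of Ω^Ω, and let G := {g ∈ M : g is a bijection and g⁻¹ ∈ M} (so that M is the endomorphism monoid and G the automorphism group of a relational structure on Ω). Assume G is oligomorphic and acts without algebraicity. Let U ⊆ Ω^n be M-invariant and let ∼ be an M-invariant equivalence relation on U; assume B := U/∼ is dense and the induced action of G on B is without algebraicity. Then the entanglement relation is preserved by every finite-to-one e ∈ M: if a ∈ Ω entangles the class u/∼ of u ∈ U, then e(a) entangles the class (e∘u)/∼. -/

import Mathlib

/-- The topology of pointwise convergence on functions `α → β`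
(product topology with `β` discrete). -/
def FnTop (α β : Type*) : TopologicalSpace (α → β) :=
  @Pi.topologicalSpace α (fun _ => β) (fun _ => ⊥)

/-- The coordinatewise action of a permutation on tuples. -/
def tAct {Ω : Type*} (g : Equiv.Perm Ω) {n : ℕ} (u : Fin n → Ω) : Fin n → Ω :=
  fun i => g (u i)

/-- The action of a permutation on sets of tuples. -/
def sAct {Ω : Type*} (g : Equiv.Perm Ω) {n : ℕ} (c : Set (Fin n → Ω)) : Set (Fin n → Ω) :=
  tAct g '' c

/-- A set of permutations is oligomorphic if for every `n` its coordinatewise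
action on `n`-tuples has finitely many orbits. -/
def Oligo {Ω : Type*} (G : Set (Equiv.Perm Ω)) : Prop :=
  ∀ n : ℕ, Set.Finite {o : Set (Fin n → Ω) | ∃ t : Fin n → Ω, o = {s | ∃ g ∈ G, s = tAct g t}}

/-- `G` acts without algebraicity on `Ω`: if the orbit of `a` under the pointwise
stabiliser of a finite tuple `y` is finite, then `a` is an entry of `y`. -/
def NoAlg {Ω : Type*} (G : Set (Equiv.Perm Ω)) : Prop :=
  ∀ (m : ℕ) (y : Fin m → Ω) (a : Ω),
    Set.Finite {b : Ω | ∃ g ∈ G, (∀ i, g (y i) = y i) ∧ b = g a} → ∃ i, a = y i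

/-- `G` is topologically closed in the space of permutations with the topology of
pointwise convergence. -/
def TopClosedPerm {Ω : Type*} (G : Set (Equiv.Perm Ω)) : Prop :=
  @IsClosed (Ω → Ω) (FnTop Ω Ω) {f | ∃ g ∈ G, f = ⇑g}

/-- The `r`-equivalence class of a tuple `u ∈ U`. -/
def cls {Ω : Type*} {n : ℕ} (U : Set (Fin n → Ω))
    (r : (Fin n → Ω) → (Fin n → Ω) → Prop) (u : Fin n → Ω) : Set (Fin n → Ω) :=
  {v ∈ U | r u v}

/-- The quotient `B = U/∼`, realised as the set of equivalence classes. -/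
def classes {Ω : Type*} {n : ℕ} (U : Set (Fin n → Ω))
    (r : (Fin n → Ω) → (Fin n → Ω) → Prop) : Set (Set (Fin n → Ω)) :=
  {c | ∃ u ∈ U, c = cls U r u}

/-- `a` entangles the class `c` if `a` is an entry of every tuple in `c`. -/
def Entangles {Ω : Type*} {n : ℕ} (a : Ω) (c : Set (Fin n → Ω)) : Prop :=
  ∀ v ∈ c, ∃ i, v i = a

/-- `a` strongly entangles `c ∈ B` if it entangles `c` and no other element of `B`. -/
def StronglyEntangles {Ω : Type*} {n : ℕ} (B : Set (Set (Fin n → Ω))) (a : Ω)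
    (c : Set (Fin n → Ω)) : Prop :=
  Entangles a c ∧ ∀ c' ∈ B, Entangles a c' → c' = c

/-- `a` is algebraic over `c`: the orbit of `a` under the stabiliser `G_c` is finite. -/
def AlgebraicOver {Ω : Type*} {n : ℕ} (G : Set (Equiv.Perm Ω)) (a : Ω)
    (c : Set (Fin n → Ω)) : Prop :=
  Set.Finite {b : Ω | ∃ g ∈ G, sAct g c = c ∧ b = g a}

/-- `B` is dense: for every `a ∈ Ω` there are `c₁,…,c_k ∈ B` whose joint stabiliser
is contained in the stabiliser of `a`. -/
def DenseClasses {Ω : Type*} {n : ℕ} (G : Set (Equiv.Perm Ω))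
    (B : Set (Set (Fin n → Ω))) : Prop :=
  ∀ a : Ω, ∃ (k : ℕ) (cc : Fin k → Set (Fin n → Ω)),
    (∀ i, cc i ∈ B) ∧ ∀ g ∈ G, (∀ i, sAct g (cc i) = cc i) → g a = a

/-- The induced action of `G` on `B` is without algebraicity. -/
def NoAlgOn {Ω : Type*} {n : ℕ} (G : Set (Equiv.Perm Ω))
    (B : Set (Set (Fin n → Ω))) : Prop :=
  ∀ (m : ℕ) (cc : Fin m → Set (Fin n → Ω)) (c : Set (Fin n → Ω)),
    (∀ i, cc i ∈ B) → c ∈ B →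
    Set.Finite {c' | ∃ g ∈ G, (∀ i, sAct g (cc i) = cc i) ∧ c' = sAct g c} →
    ∃ i, c = cc i

/-- The topology of pointwise convergence on `Function.End Ω`. -/
def endTop (Ω : Type*) : TopologicalSpace (Function.End Ω) := FnTop Ω Ω

/-- The unit group of a submonoid `M` of `Ω^Ω`: bijective elements of `M`
whose inverse also belongs to `M`, viewed as permutations. -/
def unitSet {Ω : Type*} (M : Submonoid (Function.End Ω)) : Set (Equiv.Perm Ω) :=
  {g | (⇑g : Function.End Ω) ∈ M ∧ (⇑g.symm : Function.End Ω) ∈ M}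

/-- A function is finite-to-one if every point has finite preimage. -/
def FinToOne {Ω : Type*} (e : Ω → Ω) : Prop :=
  ∀ b : Ω, Set.Finite {x | e x = b}

namespace EntanglementAux

variable {Ω : Type} {M : Submonoid (Function.End Ω)}
variable {n : ℕ} {U : Set (Fin n → Ω)} {r : (Fin n → Ω) → (Fin n → Ω) → Prop}

lemma mem_unit_one : (1 : Equiv.Perm Ω) ∈ unitSet M := by
  constructor
  · show (⇑(1 : Equiv.Perm Ω) : Function.End Ω) ∈ M
    have h : (⇑(1 : Equiv.Perm Ω) : Function.End Ω) = (1 : Function.End Ω) := rfl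
    rw [h]; exact M.one_mem
  · show (⇑(1 : Equiv.Perm Ω).symm : Function.End Ω) ∈ M
    have h : (⇑(1 : Equiv.Perm Ω).symm : Function.End Ω) = (1 : Function.End Ω) := rfl
    rw [h]; exact M.one_mem

lemma mem_unit_mul {g h : Equiv.Perm Ω} (hg : g ∈ unitSet M) (hh : h ∈ unitSet M) :
    g * h ∈ unitSet M := by
  constructor
  · show (⇑(g * h) : Function.End Ω) ∈ M
    have := M.mul_mem hg.1 hh.1; exact this
  · show (⇑(g * h).symm : Function.End Ω) ∈ M
    have := M.mul_mem hh.2 hg.2; exact this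

lemma mem_cls (hrefl : ∀ u ∈ U, r u u) {u₀ : Fin n → Ω} (hu₀ : u₀ ∈ U) :
    u₀ ∈ cls U r u₀ := ⟨hu₀, hrefl u₀ hu₀⟩

lemma cls_eq_of_mem
    (hsymm : ∀ u ∈ U, ∀ v ∈ U, r u v → r v u)
    (htrans : ∀ u ∈ U, ∀ v ∈ U, ∀ w ∈ U, r u v → r v w → r u w)
    {u₀ v : Fin n → Ω} (hu₀ : u₀ ∈ U) (hv : v ∈ cls U r u₀) :
    cls U r v = cls U r u₀ := by
  obtain ⟨hvU, hruv⟩ := hv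
  ext w
  constructor
  · rintro ⟨hwU, hrvw⟩
    exact ⟨hwU, htrans u₀ hu₀ v hvU w hwU hruv hrvw⟩
  · rintro ⟨hwU, hruw⟩
    exact ⟨hwU, htrans v hvU u₀ hu₀ w hwU (hsymm u₀ hu₀ v hvU hruv) hruw⟩

lemma sAct_cls
    (hUinv : ∀ e ∈ M, ∀ u ∈ U, (fun i => e (u i)) ∈ U)
    (hrinv : ∀ e ∈ M, ∀ u ∈ U, ∀ v ∈ U, r u v → r (fun i => e (u i)) (fun i => e (v i)))
    {g : Equiv.Perm Ω} (hg : g ∈ unitSet M) {u₀ : Fin n → Ω} (hu₀ : u₀ ∈ U) :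
    sAct g (cls U r u₀) = cls U r (tAct g u₀) := by
  ext w
  constructor
  · rintro ⟨v, ⟨hvU, hrv⟩, rfl⟩
    exact ⟨hUinv _ hg.1 v hvU, hrinv _ hg.1 u₀ hu₀ v hvU hrv⟩
  · rintro ⟨hwU, hrw⟩
    refine ⟨tAct g.symm w, ⟨hUinv _ hg.2 w hwU, ?_⟩, ?_⟩
    · have h1 := hrinv _ hg.2 (tAct g u₀) (hUinv _ hg.1 u₀ hu₀) w hwU hrw
      have h2 : (fun i => g.symm (tAct g u₀ i)) = u₀ := by
        funext i; simp [tAct]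
      rw [h2] at h1
      exact h1
    · funext i
      simp [tAct]

lemma tAct_mem_U
    (hUinv : ∀ e ∈ M, ∀ u ∈ U, (fun i => e (u i)) ∈ U)
    {g : Equiv.Perm Ω} (hg : g ∈ unitSet M) {u₀ : Fin n → Ω} (hu₀ : u₀ ∈ U) :
    tAct g u₀ ∈ U := hUinv _ hg.1 u₀ hu₀

lemma entangles_sAct (g : Equiv.Perm Ω) {x : Ω} {Z : Set (Fin n → Ω)}
    (h : Entangles x Z) : Entangles (g x) (sAct g Z) := by
  rintro v ⟨v₀, hv₀, rfl⟩
  obtain ⟨i, hi⟩ := h v₀ hv₀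
  exact ⟨i, by simp [tAct, hi]⟩

lemma entangles_finite (hrefl : ∀ u ∈ U, r u u) {u₀ : Fin n → Ω} (hu₀ : u₀ ∈ U) :
    Set.Finite {b : Ω | Entangles b (cls U r u₀)} := by
  refine (Set.finite_range u₀).subset ?_
  rintro b hb
  obtain ⟨i, hi⟩ := hb u₀ (mem_cls hrefl hu₀)
  exact ⟨i, hi⟩

/-- Mobility: one can fix a tuple `w` pointwise while moving all points
not among the entries of `w` off any finite set `F`. -/
lemma mobility (hGnoalg : NoAlg (unitSet M)) :
    ∀ (l : ℕ) (x : Fin l → Ω) (q : ℕ) (w : Fin q → Ω) (F : Set Ω), F.Finite →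
    ∃ g ∈ unitSet (M := M), (∀ j, g (w j) = w j) ∧
      ∀ i, x i ∉ Set.range w → g (x i) ∉ F := by
  intro l
  induction l with
  | zero =>
    intro x q w F hF
    exact ⟨1, mem_unit_one, fun j => rfl, fun i => i.elim0⟩
  | succ l ih =>
    intro x q w F hF
    obtain ⟨g', hg', hg'w, hg'x⟩ := ih (fun i => x i.castSucc) q w F hF
    by_cases hlast : x (Fin.last l) ∈ Set.range w
    · refine ⟨g', hg', hg'w, fun i hi => ?_⟩
      rcases Fin.eq_castSucc_or_eq_last i with ⟨j, rfl⟩ | rfl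
      · exact hg'x j hi
      · exact absurd hlast hi
    · by_cases hdup : ∃ i : Fin l, x i.castSucc = x (Fin.last l)
      · obtain ⟨i₀, hi₀⟩ := hdup
        refine ⟨g', hg', hg'w, fun i hi => ?_⟩
        rcases Fin.eq_castSucc_or_eq_last i with ⟨j, rfl⟩ | rfl
        · exact hg'x j hi
        · have h1 : x i₀.castSucc ∉ Set.range w := by rw [hi₀]; exact hi
          have h2 := hg'x i₀ h1
          rw [hi₀] at h2
          exact h2
      · set y : Fin (q + l) → Ω :=
          Fin.append w (fun i : Fin l => g' (x i.castSucc)) with hy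
        set p := g' (x (Fin.last l)) with hp
        have hpy : ∀ j, p ≠ y j := by
          intro j
          refine Fin.addCases (motive := fun j => p ≠ y j) ?_ ?_ j
          · intro j1
            rw [hy, Fin.append_left]
            intro hcontra
            have h3 : g' (x (Fin.last l)) = g' (w j1) := by
              rw [hg'w j1]; exact hcontra
            have h4 : x (Fin.last l) = w j1 := g'.injective h3
            exact hlast ⟨j1, h4.symm⟩
          · intro j2
            rw [hy, Fin.append_right]
            intro hcontra
            have h4 : x (Fin.last l) = x j2.castSucc := g'.injective hcontra
            exact hdup ⟨j2, h4.symm⟩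
        have hOrbInf : ¬ Set.Finite
            {b : Ω | ∃ g₂ ∈ unitSet (M := M), (∀ j, g₂ (y j) = y j) ∧ b = g₂ p} := by
          intro hfin
          obtain ⟨j, hj⟩ := hGnoalg (q + l) y p hfin
          exact hpy j hj
        have hinf : Set.Infinite
            {b : Ω | ∃ g₂ ∈ unitSet (M := M), (∀ j, g₂ (y j) = y j) ∧ b = g₂ p} := hOrbInf
        obtain ⟨b, hb⟩ := (hinf.diff hF).nonempty
        obtain ⟨⟨g₂, hg₂, hg₂y, hbval⟩, hbF⟩ := hb
        refine ⟨g₂ * g', mem_unit_mul hg₂ hg', ?_, ?_⟩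
        · intro j
          have h1 : (g₂ * g') (w j) = g₂ (g' (w j)) := rfl
          rw [h1, hg'w j]
          have h2 := hg₂y (Fin.castAdd l j)
          rwa [hy, Fin.append_left] at h2
        · intro i hi
          rcases Fin.eq_castSucc_or_eq_last i with ⟨j, rfl⟩ | rfl
          · have h1 : (g₂ * g') (x j.castSucc) = g₂ (g' (x j.castSucc)) := rfl
            rw [h1]
            have h2 := hg₂y (Fin.natAdd q j)
            rw [hy, Fin.append_right] at h2
            rw [h2]
            exact hg'x j hi
          · have h1 : (g₂ * g') (x (Fin.last l)) = g₂ p := rfl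
            rw [h1, ← hbval]
            exact hbF

/-- Avoidance: if no element of the finite set `Q` entangles the class of `u₀`,
then some tuple in the class avoids `Q` entirely. -/
lemma av_aux
    (hGnoalg : NoAlg (unitSet M))
    (hsymm : ∀ u ∈ U, ∀ v ∈ U, r u v → r v u)
    (htrans : ∀ u ∈ U, ∀ v ∈ U, ∀ w ∈ U, r u v → r v w → r u w)
    (hUinv : ∀ e ∈ M, ∀ u ∈ U, (fun i => e (u i)) ∈ U)
    (hrinv : ∀ e ∈ M, ∀ u ∈ U, ∀ v ∈ U, r u v → r (fun i => e (u i)) (fun i => e (v i)))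
    {u₀ : Fin n → Ω} (hu₀ : u₀ ∈ U) (Q : Set Ω) (hQ : Q.Finite)
    (havoid : ∀ q ∈ Q, ∃ v, v ∈ cls U r u₀ ∧ ∀ i, v i ≠ q) :
    ∀ (k : ℕ) (v : Fin n → Ω), v ∈ cls U r u₀ → (Q ∩ Set.range v).ncard ≤ k →
    ∃ v', v' ∈ cls U r u₀ ∧ ∀ i, v' i ∉ Q := by
  intro k
  induction k with
  | zero =>
    intro v hv hcard
    have hfin : (Q ∩ Set.range v).Finite := hQ.inter_of_left _
    have hempty : (Q ∩ Set.range v) = ∅ :=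
      (Set.ncard_eq_zero hfin).mp (Nat.le_zero.mp hcard)
    refine ⟨v, hv, fun i hiQ => ?_⟩
    have : v i ∈ Q ∩ Set.range v := ⟨hiQ, ⟨i, rfl⟩⟩
    rw [hempty] at this
    exact this
  | succ k ih =>
    intro v hv hcard
    by_cases hempty : (Q ∩ Set.range v) = ∅
    · refine ⟨v, hv, fun i hiQ => ?_⟩
      have : v i ∈ Q ∩ Set.range v := ⟨hiQ, ⟨i, rfl⟩⟩
      rw [hempty] at this
      exact this
    · obtain ⟨q', hq'⟩ := Set.nonempty_iff_ne_empty.mpr hempty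
      obtain ⟨vq, hvq_mem, hvq_avoid⟩ := havoid q' hq'.1
      have hvqU : vq ∈ U := hvq_mem.1
      obtain ⟨g, hg, hgw, hgx⟩ := mobility hGnoalg n v n vq Q hQ
      have hv'' : tAct g v ∈ cls U r u₀ := by
        have h1 : cls U r vq = cls U r u₀ := cls_eq_of_mem hsymm htrans hu₀ hvq_mem
        have h2 : v ∈ cls U r vq := by rw [h1]; exact hv
        have h3 : tAct g v ∈ sAct g (cls U r vq) := ⟨v, h2, rfl⟩
        rw [sAct_cls hUinv hrinv hg hvqU] at h3
        have h4 : tAct g vq = vq := funext fun j => hgw j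
        rw [h4, h1] at h3
        exact h3
      have htrace : (Q ∩ Set.range (tAct g v)) ⊆ (Q ∩ Set.range v) \ {q'} := by
        rintro b ⟨hbQ, ⟨i, hbi⟩⟩
        by_cases hc : v i ∈ Set.range vq
        · obtain ⟨j, hj⟩ := hc
          have hfix : g (v i) = v i := by rw [← hj, hgw j]
          have hbvi : b = v i := by rw [← hbi]; exact hfix
          constructor
          · exact ⟨hbQ, ⟨i, hbvi.symm⟩⟩
          · simp only [Set.mem_singleton_iff]
            intro hbq'
            apply hvq_avoid j
            rw [hj, ← hbvi, hbq']
        · exact absurd hbQ (by rw [← hbi]; exact hgx i hc)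
      have hlt : (Q ∩ Set.range (tAct g v)).ncard ≤ k := by
        have h5 : ((Q ∩ Set.range v) \ {q'}).ncard < (Q ∩ Set.range v).ncard :=
          Set.ncard_diff_singleton_lt_of_mem hq' (hQ.inter_of_left _)
        have h6 : (Q ∩ Set.range (tAct g v)).ncard ≤ ((Q ∩ Set.range v) \ {q'}).ncard :=
          Set.ncard_le_ncard htrace ((hQ.inter_of_left _).diff)
        omega
      exact ih (tAct g v) hv'' hlt

lemma av
    (hGnoalg : NoAlg (unitSet M))
    (hrefl : ∀ u ∈ U, r u u)
    (hsymm : ∀ u ∈ U, ∀ v ∈ U, r u v → r v u)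
    (htrans : ∀ u ∈ U, ∀ v ∈ U, ∀ w ∈ U, r u v → r v w → r u w)
    (hUinv : ∀ e ∈ M, ∀ u ∈ U, (fun i => e (u i)) ∈ U)
    (hrinv : ∀ e ∈ M, ∀ u ∈ U, ∀ v ∈ U, r u v → r (fun i => e (u i)) (fun i => e (v i)))
    {u₀ : Fin n → Ω} (hu₀ : u₀ ∈ U) (Q : Set Ω) (hQ : Q.Finite)
    (hmeet : ∀ v ∈ cls U r u₀, ∃ i, v i ∈ Q) :
    ∃ q ∈ Q, Entangles q (cls U r u₀) := by
  by_contra hcon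
  push_neg at hcon
  have havoid : ∀ q ∈ Q, ∃ v, v ∈ cls U r u₀ ∧ ∀ i, v i ≠ q := by
    intro q hq
    have h1 := hcon q hq
    unfold Entangles at h1
    push_neg at h1
    obtain ⟨v, hv1, hv2⟩ := h1
    exact ⟨v, hv1, hv2⟩
  obtain ⟨v', hv', hv'avoid⟩ := av_aux hGnoalg hsymm htrans hUinv hrinv hu₀ Q hQ havoid
    ((Q ∩ Set.range u₀).ncard) u₀ (mem_cls hrefl hu₀) le_rfl
  obtain ⟨i, hi⟩ := hmeet v' hv'
  exact hv'avoid i hi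

/-- Ubiquity: every point entangles some class. -/
lemma exists_entangled
    (hGnoalg : NoAlg (unitSet M))
    (hsymm : ∀ u ∈ U, ∀ v ∈ U, r u v → r v u)
    (htrans : ∀ u ∈ U, ∀ v ∈ U, ∀ w ∈ U, r u v → r v w → r u w)
    (hUinv : ∀ e ∈ M, ∀ u ∈ U, (fun i => e (u i)) ∈ U)
    (hrinv : ∀ e ∈ M, ∀ u ∈ U, ∀ v ∈ U, r u v → r (fun i => e (u i)) (fun i => e (v i)))
    (hdense : DenseClasses (unitSet M) (classes U r))
    (x : Ω) : ∃ Z ∈ classes U r, Entangles x Z := by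
  obtain ⟨k, cc, hccB, hpin⟩ := hdense x
  by_contra hcon
  push_neg at hcon
  have hwit : ∀ i : Fin k, ∃ v, v ∈ cc i ∧ ∀ j, v j ≠ x := by
    intro i
    have h1 := hcon (cc i) (hccB i)
    unfold Entangles at h1
    push_neg at h1
    obtain ⟨v, hv1, hv2⟩ := h1
    exact ⟨v, hv1, hv2⟩
  choose v hv hvx using hwit
  set y : Fin (k * n) → Ω :=
    fun l => v (finProdFinEquiv.symm l).1 (finProdFinEquiv.symm l).2 with hy
  have horb : {b : Ω | ∃ g ∈ unitSet (M := M), (∀ i, g (y i) = y i) ∧ b = g x} ⊆ {x} := by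
    rintro b ⟨g, hg, hfix, rfl⟩
    have hfix' : ∀ (i : Fin k) (j : Fin n), g (v i j) = v i j := by
      intro i j
      have h2 := hfix (finProdFinEquiv (i, j))
      have h3 : y (finProdFinEquiv (i, j)) = v i j := by
        rw [hy]
        simp only [Equiv.symm_apply_apply]
      rw [h3] at h2
      exact h2
    have hstab : ∀ i, sAct g (cc i) = cc i := by
      intro i
      obtain ⟨ui, huiU, hcci⟩ := hccB i
      have hvmem : v i ∈ cls U r ui := by rw [← hcci]; exact hv i
      have hviU : v i ∈ U := hvmem.1
      have h2 : cls U r (v i) = cls U r ui := cls_eq_of_mem hsymm htrans huiU hvmem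
      have h3 : sAct g (cls U r (v i)) = cls U r (tAct g (v i)) :=
        sAct_cls hUinv hrinv hg hviU
      have h4 : tAct g (v i) = v i := funext fun j => hfix' i j
      rw [hcci, ← h2, h3, h4, h2]
    exact Set.mem_singleton_iff.mpr (hpin g hg hstab)
  obtain ⟨l, hl⟩ := hGnoalg (k * n) y x ((Set.finite_singleton x).subset horb)
  have h4 : y l = v (finProdFinEquiv.symm l).1 (finProdFinEquiv.symm l).2 := by rw [hy]
  exact hvx _ _ (h4 ▸ hl.symm)

/-- Every class has a "label": an entangler that entangles no other class. -/
lemma exists_unique_label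
    (hGnoalg : NoAlg (unitSet M))
    (hrefl : ∀ u ∈ U, r u u)
    (hsymm : ∀ u ∈ U, ∀ v ∈ U, r u v → r v u)
    (htrans : ∀ u ∈ U, ∀ v ∈ U, ∀ w ∈ U, r u v → r v w → r u w)
    (hUinv : ∀ e ∈ M, ∀ u ∈ U, (fun i => e (u i)) ∈ U)
    (hrinv : ∀ e ∈ M, ∀ u ∈ U, ∀ v ∈ U, r u v → r (fun i => e (u i)) (fun i => e (v i)))
    (hdense : DenseClasses (unitSet M) (classes U r))
    (hBnoalg : NoAlgOn (unitSet M) (classes U r))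
    {u₀ : Fin n → Ω} (hu₀ : u₀ ∈ U) :
    ∃ z, Entangles z (cls U r u₀) ∧
      ∀ Z' ∈ classes U r, Entangles z Z' → Z' = cls U r u₀ := by
  classical
  have hchoice : ∀ j : Fin n, ∃ X, (X ∈ classes U r ∧ Entangles (u₀ j) X) ∧
      ((∃ X' ∈ classes U r, Entangles (u₀ j) X' ∧ X' ≠ cls U r u₀) → X ≠ cls U r u₀) := by
    intro j
    by_cases hj : ∃ X' ∈ classes U r, Entangles (u₀ j) X' ∧ X' ≠ cls U r u₀
    · obtain ⟨X', hX'mem, hX'ent, hX'ne⟩ := hj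
      exact ⟨X', ⟨hX'mem, hX'ent⟩, fun _ => hX'ne⟩
    · obtain ⟨X, hXmem, hXent⟩ :=
        exists_entangled hGnoalg hsymm htrans hUinv hrinv hdense (u₀ j)
      exact ⟨X, ⟨hXmem, hXent⟩, fun h => absurd h hj⟩
  choose X hX₁ hX₂ using hchoice
  have hDcl : cls U r u₀ ∈ classes U r := ⟨u₀, hu₀, rfl⟩
  have hfin : Set.Finite {c' | ∃ g ∈ unitSet (M := M),
      (∀ i, sAct g (X i) = X i) ∧ c' = sAct g (cls U r u₀)} := by
    have hEfin : ∀ j : Fin n, Set.Finite {b : Ω | Entangles b (X j)} := by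
      intro j
      obtain ⟨uj, hujU, hXj⟩ := (hX₁ j).1
      refine (Set.finite_range uj).subset ?_
      rintro b hb
      have hujX : uj ∈ X j := by rw [hXj]; exact mem_cls hrefl hujU
      obtain ⟨i, hi⟩ := hb uj hujX
      exact ⟨i, hi⟩
    refine Set.Finite.subset
      (Set.Finite.image (fun τ => cls U r τ) (Set.Finite.pi hEfin)) ?_
    rintro c' ⟨g, hg, hfix, rfl⟩
    refine ⟨tAct g u₀, ?_, (sAct_cls hUinv hrinv hg hu₀).symm⟩
    intro j _
    have h1 := entangles_sAct g (hX₁ j).2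
    rw [hfix j] at h1
    exact h1
  obtain ⟨j, hD⟩ := hBnoalg n X (cls U r u₀) (fun j => (hX₁ j).1) hDcl hfin
  refine ⟨u₀ j, ?_, ?_⟩
  · rw [hD]; exact (hX₁ j).2
  · intro Z' hZ' hent'
    by_contra hne
    exact hX₂ j ⟨Z', hZ', hent', hne⟩ hD.symm

/-- Any entangler of a class equals its label. -/
lemma entangler_eq_label
    (hGnoalg : NoAlg (unitSet M))
    (hrefl : ∀ u ∈ U, r u u)
    (hUinv : ∀ e ∈ M, ∀ u ∈ U, (fun i => e (u i)) ∈ U)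
    (hrinv : ∀ e ∈ M, ∀ u ∈ U, ∀ v ∈ U, r u v → r (fun i => e (u i)) (fun i => e (v i)))
    {u₀ : Fin n → Ω} (hu₀ : u₀ ∈ U) (z : Ω)
    (hzE : Entangles z (cls U r u₀))
    (hzU : ∀ Z' ∈ classes U r, Entangles z Z' → Z' = cls U r u₀)
    (p : Ω) (hpE : Entangles p (cls U r u₀)) : p = z := by
  have hstab : ∀ g : Equiv.Perm Ω, g ∈ unitSet M → g z = z →
      sAct g (cls U r u₀) = cls U r u₀ := by
    intro g hg hgz
    apply hzU
    · exact ⟨tAct g u₀, tAct_mem_U hUinv hg hu₀,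
        sAct_cls hUinv hrinv hg hu₀⟩
    · have h1 := entangles_sAct g hzE
      rwa [hgz] at h1
  have hsub : {b : Ω | ∃ g ∈ unitSet (M := M),
      (∀ i : Fin 1, g ((fun _ => z) i) = (fun _ => z) i) ∧ b = g p}
      ⊆ {b : Ω | Entangles b (cls U r u₀)} := by
    rintro b ⟨g, hg, hfix, rfl⟩
    have h1 : g z = z := hfix 0
    have h2 := entangles_sAct g hpE
    rwa [hstab g hg h1] at h2
  obtain ⟨i, hi⟩ := hGnoalg 1 (fun _ => z) p
    ((entangles_finite hrefl hu₀).subset hsub)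
  exact hi

end EntanglementAux

theorem entanglement_preserved_by_finite_to_one
    {Ω : Type} [Countable Ω] [Infinite Ω]
    (M : Submonoid (Function.End Ω))
    (hMclosed : @IsClosed (Function.End Ω) (endTop Ω) (M : Set (Function.End Ω)))
    (hGoligo : Oligo (unitSet M))
    (hGnoalg : NoAlg (unitSet M))
    {n : ℕ} (U : Set (Fin n → Ω))
    (hUinv : ∀ e ∈ M, ∀ u ∈ U, (fun i => e (u i)) ∈ U)
    (r : (Fin n → Ω) → (Fin n → Ω) → Prop)
    (hrefl : ∀ u ∈ U, r u u)
    (hsymm : ∀ u ∈ U, ∀ v ∈ U, r u v → r v u)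
    (htrans : ∀ u ∈ U, ∀ v ∈ U, ∀ w ∈ U, r u v → r v w → r u w)
    (hrinv : ∀ e ∈ M, ∀ u ∈ U, ∀ v ∈ U, r u v → r (fun i => e (u i)) (fun i => e (v i)))
    (hdense : DenseClasses (unitSet M) (classes U r))
    (hBnoalg : NoAlgOn (unitSet M) (classes U r))
    :
    ∀ e ∈ M, FinToOne e → ∀ (a : Ω), ∀ u ∈ U,
      Entangles a (cls U r u) → Entangles (e a) (cls U r (fun i => e (u i))) := by
  intro e heM hf2o a u huU hEnt
  classical
  have heu : (fun i => e (u i)) ∈ U := hUinv e heM u huU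
  obtain ⟨z, hzE, hzU⟩ := EntanglementAux.exists_unique_label hGnoalg hrefl hsymm htrans
    hUinv hrinv hdense hBnoalg huU
  obtain ⟨β, hβE, hβU⟩ := EntanglementAux.exists_unique_label hGnoalg hrefl hsymm htrans
    hUinv hrinv hdense hBnoalg heu
  have haz : a = z := EntanglementAux.entangler_eq_label hGnoalg hrefl hUinv hrinv huU z
    hzE hzU a hEnt
  have hQfin : Set.Finite {x : Ω | e x = β} := hf2o β
  have hmeet : ∀ v ∈ cls U r u, ∃ i, v i ∈ {x : Ω | e x = β} := by
    intro v hv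
    have hev : (fun i => e (v i)) ∈ cls U r (fun i => e (u i)) :=
      ⟨hUinv e heM v hv.1, hrinv e heM u huU v hv.1 hv.2⟩
    obtain ⟨i, hi⟩ := hβE _ hev
    exact ⟨i, hi⟩
  obtain ⟨q, hqβ, hqE⟩ := EntanglementAux.av hGnoalg hrefl hsymm htrans hUinv hrinv huU
    {x : Ω | e x = β} hQfin hmeet
  have hqz : q = z := EntanglementAux.entangler_eq_label hGnoalg hrefl hUinv hrinv huU z
    hzE hzU q hqE
  have heaβ : e a = β := by rw [haz, ← hqz]; exact hqβ
  rw [heaβ]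
  exact hβE
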